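/- Let D₁ and D₂ be closed disks in ℝ² with centers c₁ ≠ c₂ and radii r₁ ≥ r₂ > 0, whose boundary circles intersect at a point u with angle ∠c₁ u c₂ at least 2π/3. Let c = c₁ + √3·r₁·(c₂ − c₁)/‖c₂ − c₁‖ and let E be the closed disk of radius r₁ centered at c. Then every closed disk F of radius at least r₁ that intersects both D₁ and D₂ also intersects E. -/

import Mathlib

set_option maxHeartbeats 1000000

lemma aux_inter_nonempty {V : Type*} [NormedAddCommGroup V] [NormedSpace ℝ V]
    {f c : V} {R r : ℝ} (hR : 0 ≤ R) (hr : 0 ≤ r) (h : dist f c ≤ R + r) :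
    (Metric.closedBall f R ∩ Metric.closedBall c r).Nonempty := by
  rcases eq_or_lt_of_le (add_nonneg hR hr) with h0 | h0
  · refine ⟨f, by simpa using hR, ?_⟩
    simp only [Metric.mem_closedBall, dist_comm f c] at h ⊢
    linarith
  · set t : ℝ := R / (R + r) with ht
    have ht0 : 0 ≤ t := div_nonneg hR h0.le
    have ht1 : t ≤ 1 := (div_le_one h0).2 (by linarith)
    have hfc : ‖f - c‖ ≤ R + r := by rw [← dist_eq_norm]; exact h
    refine ⟨f + t • (c - f), ?_, ?_⟩
    · simp only [Metric.mem_closedBall, dist_eq_norm]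
      have e : f + t • (c - f) - f = (-t) • (f - c) := by module
      rw [e, norm_smul, Real.norm_of_nonpos (by linarith), neg_neg]
      calc t * ‖f - c‖ ≤ t * (R + r) := mul_le_mul_of_nonneg_left hfc ht0
        _ = R := by rw [ht]; field_simp
    · simp only [Metric.mem_closedBall, dist_eq_norm]
      have e : f + t • (c - f) - c = (1 - t) • (f - c) := by module
      rw [e, norm_smul, Real.norm_of_nonneg (by linarith)]
      calc (1 - t) * ‖f - c‖ ≤ (1 - t) * (R + r) :=
            mul_le_mul_of_nonneg_left hfc (by linarith)
        _ = r := by rw [ht]; field_simp; ring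

/-- **Claim (*) in the proof of the four-point lemma.**
Let `D₁`, `D₂` be closed disks with centers `c₁ ≠ c₂` and radii `r₁ ≥ r₂ > 0`, whose
boundary circles meet at a point `u` with lens angle `∠ c₁ u c₂ ≥ 2π/3`.  Let
`c = c₁ + √3·r₁·(c₂ − c₁)/‖c₂ − c₁‖` and let `E` be the closed disk of radius `r₁`
centered at `c`.  Then every closed disk `F` of radius at least `r₁` intersecting
both `D₁` and `D₂` also intersects `E`. -/
theorem large_disk_meets_E
    (c₁ c₂ : EuclideanSpace ℝ (Fin 2)) (r₁ r₂ : ℝ)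
    (hc : c₁ ≠ c₂) (hr₂ : 0 < r₂) (hr : r₂ ≤ r₁)
    (u : EuclideanSpace ℝ (Fin 2))
    (hu₁ : dist u c₁ = r₁) (hu₂ : dist u c₂ = r₂)
    (hangle : 2 * Real.pi / 3 ≤ EuclideanGeometry.angle c₁ u c₂)
    (c : EuclideanSpace ℝ (Fin 2))
    (hcdef : c = c₁ + (Real.sqrt 3 * r₁ / ‖c₂ - c₁‖) • (c₂ - c₁)) :
    ∀ (f : EuclideanSpace ℝ (Fin 2)) (R : ℝ), r₁ ≤ R →
      (Metric.closedBall f R ∩ Metric.closedBall c₁ r₁).Nonempty →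
      (Metric.closedBall f R ∩ Metric.closedBall c₂ r₂).Nonempty →
      (Metric.closedBall f R ∩ Metric.closedBall c r₁).Nonempty := by
  intro f R hRr₁ hF1 hF2
  have hr₁ : 0 < r₁ := lt_of_lt_of_le hr₂ hr
  have hR : 0 < R := lt_of_lt_of_le hr₁ hRr₁
  obtain ⟨x, hx1, hx2⟩ := hF1
  obtain ⟨y, hy1, hy2⟩ := hF2
  simp only [Metric.mem_closedBall] at hx1 hx2 hy1 hy2
  have hfc₁ : dist f c₁ ≤ R + r₁ :=
    (dist_triangle f x c₁).trans (by rw [dist_comm f x]; linarith)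
  have hfc₂ : dist f c₂ ≤ R + r₂ :=
    (dist_triangle f y c₂).trans (by rw [dist_comm f y]; linarith)
  set d : ℝ := dist c₁ c₂ with hdd
  have hd : 0 < d := dist_pos.2 hc
  have hnorm : ‖c₂ - c₁‖ = d := by rw [← dist_eq_norm, dist_comm]
  -- law of cosines
  have hcos : Real.cos (EuclideanGeometry.angle c₁ u c₂) ≤ -(1/2) := by
    have h1 : EuclideanGeometry.angle c₁ u c₂ ≤ Real.pi := EuclideanGeometry.angle_le_pi _ _ _
    have := Real.cos_le_cos_of_nonneg_of_le_pi
      (by positivity : (0:ℝ) ≤ 2 * Real.pi / 3) h1 hangle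
    have hc23 : Real.cos (2 * Real.pi / 3) = -(1/2) := by
      have : (2 : ℝ) * Real.pi / 3 = Real.pi - Real.pi/3 := by ring
      rw [this, Real.cos_pi_sub, Real.cos_pi_div_three]
    linarith [hc23 ▸ this]
  have hlaw := EuclideanGeometry.law_cos c₁ u c₂
  rw [dist_comm c₁ u, dist_comm c₂ u, hu₁, hu₂] at hlaw
  have hdsq : r₁^2 + r₂^2 + r₁*r₂ ≤ d^2 := by
    rw [hdd]
    nlinarith [hlaw, hcos, mul_pos hr₁ hr₂]
  set s : ℝ := Real.sqrt 3 with hs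
  have hs2 : s^2 = 3 := Real.sq_sqrt (by norm_num)
  have hs0 : 0 ≤ s := Real.sqrt_nonneg 3
  have hs15 : 3/2 < s := by nlinarith
  have key : dist f c ≤ R + r₁ := by
    rcases le_or_gt (s * r₁) d with h1 | h1
    · -- c on segment
      set t : ℝ := s * r₁ / d with htd
      have ht0 : 0 ≤ t := div_nonneg (by positivity) hd.le
      have ht1 : t ≤ 1 := (div_le_one hd).2 h1
      have e : f - c = (1 - t) • (f - c₁) + t • (f - c₂) := by
        rw [hcdef, hnorm]; module
      rw [dist_eq_norm, e]
      calc ‖(1 - t) • (f - c₁) + t • (f - c₂)‖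
          ≤ ‖(1 - t) • (f - c₁)‖ + ‖t • (f - c₂)‖ := norm_add_le _ _
        _ = (1 - t) * ‖f - c₁‖ + t * ‖f - c₂‖ := by
            rw [norm_smul, norm_smul, Real.norm_of_nonneg (by linarith),
              Real.norm_of_nonneg ht0]
        _ ≤ (1 - t) * (R + r₁) + t * (R + r₂) := by
            have e1 : ‖f - c₁‖ = dist f c₁ := (dist_eq_norm _ _).symm
            have e2 : ‖f - c₂‖ = dist f c₂ := (dist_eq_norm _ _).symm
            rw [e1, e2]
            have := mul_le_mul_of_nonneg_left hfc₁ (by linarith : (0:ℝ) ≤ 1 - t)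
            have := mul_le_mul_of_nonneg_left hfc₂ ht0
            linarith
        _ ≤ R + r₁ := by nlinarith
    · -- c beyond c₂
      have hcc₂ : dist c c₂ = s * r₁ - d := by
        rw [dist_eq_norm, hcdef, hnorm]
        have e : c₁ + (s * r₁ / d) • (c₂ - c₁) - c₂ = (s * r₁ / d - 1) • (c₂ - c₁) := by
          module
        rw [e, norm_smul, hnorm, Real.norm_of_nonneg (by
          rw [sub_nonneg, le_div_iff₀ hd]; linarith)]
        rw [sub_mul, one_mul, div_mul_cancel₀ _ hd.ne']
      have hdge : r₂ + (s - 1) * r₁ ≤ d := by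
        nlinarith [sq_nonneg (d - (r₂ + (s-1)*r₁)), mul_pos hr₁ (sub_pos.2 hs15)]
      calc dist f c ≤ dist f c₂ + dist c₂ c := dist_triangle _ _ _
        _ = dist f c₂ + (s * r₁ - d) := by rw [dist_comm c₂ c, hcc₂]
        _ ≤ R + r₂ + (s * r₁ - d) := by linarith
        _ ≤ R + r₁ := by linarith
  exact aux_inter_nonempty hR.le hr₁.le key
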